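/- The k-means objective is weight-separable: let (X, d) be a finite set with a distance function d, let k satisfy 1 < k < |X|, and let S ⊆ X with 2 ≤ |S| ≤ k. Then there exists a weight function w on X such that every k-clustering C of X minimizing the k-means cost with respect to (w[X], d) places all elements of S in pairwise distinct clusters. -/

import Mathlib

open Finset

/-- A weight function assigns a positive real weight to every point. -/
def IsWeight {X : Type*} (w : X → ℝ) : Prop := ∀ x, 0 < w x

/-- A k-clustering: a partition of `X` into `k` pairwise disjoint nonempty parts. -/
def IsClustering {X : Type*} [Fintype X] [DecidableEq X]
    (C : Finset (Finset X)) (k : ℕ) : Prop :=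
  C.card = k ∧ (∀ A ∈ C, A.Nonempty) ∧
  (∀ A ∈ C, ∀ B ∈ C, A ≠ B → Disjoint A B) ∧
  (∀ x : X, ∃ A ∈ C, x ∈ A)

/-- `x ∼_C y`: `x` and `y` lie in the same cluster of `C`. -/
def SameCluster {X : Type*} [DecidableEq X] (C : Finset (Finset X)) (x y : X) : Prop :=
  ∃ A ∈ C, x ∈ A ∧ y ∈ A

/-- The k-means cost of a clustering `C` of weighted data `(w[X], d)`: for each cluster, the
sum over unordered pairs of distinct points of `d(x,y)² w(x) w(y)` (written as half the sum
over ordered pairs of distinct points), divided by the cluster weight. -/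
noncomputable def kmeansCost {X : Type*} [DecidableEq X]
    (C : Finset (Finset X)) (w : X → ℝ) (d : X → X → ℝ) : ℝ :=
  ∑ A ∈ C, ((1 / 2) * ∑ p ∈ A.offDiag, d p.1 p.2 ^ 2 * w p.1 * w p.2) / (∑ x ∈ A, w x)

/-- The min-sum cost of a clustering `C` of weighted data `(w[X], d)`: the sum over clusters
of the sum over unordered pairs of distinct points of `d(x,y) w(x) w(y)`. -/
noncomputable def minSumCost {X : Type*} [DecidableEq X]
    (C : Finset (Finset X)) (w : X → ℝ) (d : X → X → ℝ) : ℝ :=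
  ∑ A ∈ C, (1 / 2) * ∑ p ∈ A.offDiag, d p.1 p.2 * w p.1 * w p.2

/-- the k-means objective is weight-separable: for any `S ⊆ X` with
`2 ≤ |S| ≤ k` there is a weight function such that every k-clustering minimizing the
k-means cost places all elements of `S` in pairwise distinct clusters. -/
theorem kmeans_weight_separable
    {X : Type*} [Fintype X] [DecidableEq X]
    (d : X → X → ℝ) (hsym : ∀ x y, d x y = d y x) (hnn : ∀ x y, 0 ≤ d x y)
    (hzero : ∀ x y, d x y = 0 ↔ x = y)
    (k : ℕ) (hk1 : 1 < k) (hk2 : k < Fintype.card X)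
    (S : Finset X) (hS1 : 2 ≤ S.card) (hS2 : S.card ≤ k) :
    ∃ w : X → ℝ, IsWeight w ∧
      ∀ C : Finset (Finset X), IsClustering C k →
        (∀ C' : Finset (Finset X), IsClustering C' k →
          kmeansCost C w d ≤ kmeansCost C' w d) →
        ∀ x ∈ S, ∀ y ∈ S, x ≠ y → ¬ SameCluster C x y := by
  classical
  have hXne : Nonempty X := Fintype.card_pos_iff.mp (by omega)
  have huniv : (Finset.univ : Finset X).Nonempty := Finset.univ_nonempty
  -- a superset T of S of cardinality k
  obtain ⟨T, hST, hTu, hTcard⟩ :=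
    Finset.exists_subsuperset_card_eq (Finset.subset_univ S) hS2
      (by simpa using le_of_lt hk2)
  have hTne : T.Nonempty := Finset.card_pos.mp (by omega)
  obtain ⟨t₀, ht₀⟩ := hTne
  have hsdne : (Finset.univ \ T).Nonempty := by
    rw [← Finset.card_pos, Finset.card_sdiff_of_subset (Finset.subset_univ T), hTcard,
      Finset.card_univ]
    omega
  obtain ⟨u₀, hu₀⟩ := hsdne
  have hu₀T : u₀ ∉ T := (Finset.mem_sdiff.mp hu₀).2
  have hu₀t₀ : u₀ ≠ t₀ := fun h => hu₀T (h ▸ ht₀)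
  set A₀ : Finset X := insert t₀ (Finset.univ \ T) with hA₀def
  set C₀ : Finset (Finset X) :=
    insert A₀ ((T.erase t₀).image fun a => ({a} : Finset X)) with hC₀def
  have ht₀A₀ : t₀ ∈ A₀ := Finset.mem_insert_self _ _
  have hu₀A₀ : u₀ ∈ A₀ := Finset.mem_insert_of_mem hu₀
  have hA₀mem : ∀ z ∈ A₀, z ≠ t₀ → z ∉ T := by
    intro z hz hzt
    rcases Finset.mem_insert.mp hz with h | h
    · exact absurd h hzt
    · exact (Finset.mem_sdiff.mp h).2
  have hA₀notmem : A₀ ∉ (T.erase t₀).image fun a => ({a} : Finset X) := by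
    intro h
    obtain ⟨a, _, ha⟩ := Finset.mem_image.mp h
    rw [← ha] at ht₀A₀ hu₀A₀
    exact hu₀t₀ ((Finset.mem_singleton.mp hu₀A₀).trans
      (Finset.mem_singleton.mp ht₀A₀).symm)
  -- C₀ is a k-clustering
  have hC₀ : IsClustering C₀ k := by
    refine ⟨?_, ?_, ?_, ?_⟩
    · rw [hC₀def, Finset.card_insert_of_notMem hA₀notmem,
        Finset.card_image_of_injective _ Finset.singleton_injective,
        Finset.card_erase_of_mem ht₀, hTcard]
      omega
    · intro A hA
      rcases Finset.mem_insert.mp hA with h | h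
      · exact h ▸ ⟨t₀, ht₀A₀⟩
      · obtain ⟨a, _, ha⟩ := Finset.mem_image.mp h
        exact ha ▸ ⟨a, Finset.mem_singleton_self a⟩
    · intro A hA B hB hAB
      rw [Finset.disjoint_left]
      intro z hzA hzB
      rcases Finset.mem_insert.mp hA with h | h <;>
        rcases Finset.mem_insert.mp hB with h' | h'
      · exact hAB (h.trans h'.symm)
      · obtain ⟨a, haT, ha⟩ := Finset.mem_image.mp h'
        subst h; rw [← ha] at hzB
        rw [Finset.mem_singleton] at hzB
        subst hzB
        exact hA₀mem z hzA (Finset.ne_of_mem_erase haT) (Finset.mem_of_mem_erase haT)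
      · obtain ⟨a, haT, ha⟩ := Finset.mem_image.mp h
        subst h'; rw [← ha] at hzA
        rw [Finset.mem_singleton] at hzA
        subst hzA
        exact hA₀mem z hzB (Finset.ne_of_mem_erase haT) (Finset.mem_of_mem_erase haT)
      · obtain ⟨a, haT, ha⟩ := Finset.mem_image.mp h
        obtain ⟨b, hbT, hb⟩ := Finset.mem_image.mp h'
        rw [← ha, Finset.mem_singleton] at hzA
        rw [← hb, Finset.mem_singleton] at hzB
        have hab : a = b := hzA.symm.trans hzB
        exact hAB (by rw [← ha, ← hb, hab])
    · intro z
      by_cases hz : z ∈ T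
      · by_cases hzt : z = t₀
        · exact ⟨A₀, Finset.mem_insert_self _ _, hzt ▸ ht₀A₀⟩
        · refine ⟨{z}, ?_, Finset.mem_singleton_self z⟩
          exact Finset.mem_insert_of_mem
            (Finset.mem_image.mpr ⟨z, Finset.mem_erase.mpr ⟨hzt, hz⟩, rfl⟩)
      · exact ⟨A₀, Finset.mem_insert_self _ _,
          Finset.mem_insert_of_mem (Finset.mem_sdiff.mpr ⟨Finset.mem_univ z, hz⟩)⟩
  -- distances: max D and min δ on S
  set D : ℝ := Finset.univ.sup' huniv fun a => Finset.univ.sup' huniv fun b => d a b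
    with hDdef
  have hDle : ∀ a b, d a b ≤ D := by
    intro a b
    refine le_trans (Finset.le_sup' (d a) (Finset.mem_univ b)) ?_
    exact Finset.le_sup' (fun a => Finset.univ.sup' huniv fun b => d a b)
      (Finset.mem_univ a)
  have hD0 : 0 ≤ D := le_trans (hnn t₀ t₀) (hDle t₀ t₀)
  have hSod : S.offDiag.Nonempty := by
    obtain ⟨a, ha, b, hb, hab⟩ := Finset.one_lt_card.mp (by omega : 1 < S.card)
    exact ⟨(a, b), Finset.mem_offDiag.mpr ⟨ha, hb, hab⟩⟩
  set δ : ℝ := S.offDiag.inf' hSod fun p => d p.1 p.2 with hδdef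
  have hδle : ∀ x ∈ S, ∀ y ∈ S, x ≠ y → δ ≤ d x y := by
    intro x hx y hy hxy
    have h : ((x, y) : X × X) ∈ S.offDiag := Finset.mem_offDiag.mpr ⟨hx, hy, hxy⟩
    exact Finset.inf'_le (fun p => d p.1 p.2) h
  have hδpos : 0 < δ := by
    obtain ⟨p, hp, hpe⟩ := Finset.exists_mem_eq_inf' hSod fun p => d p.1 p.2
    rcases Finset.mem_offDiag.mp hp with ⟨_, _, hne⟩
    rw [hδdef, hpe]
    exact lt_of_le_of_ne (hnn _ _) fun h => hne ((hzero _ _).mp h.symm)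
  set N : ℝ := (Fintype.card X : ℝ) with hNdef
  have hN0 : 0 < N := by
    rw [hNdef]; exact_mod_cast (by omega : 0 < Fintype.card X)
  set M : ℝ := 1 + N ^ 3 * D ^ 2 / δ ^ 2 with hMdef
  have hM1 : 1 ≤ M := le_add_of_nonneg_right (by positivity)
  have hM0 : 0 < M := lt_of_lt_of_le one_pos hM1
  set w : X → ℝ := fun x => if x ∈ S then M else 1 with hwdef
  have hwpos : ∀ x, 0 < w x := by
    intro x; rw [hwdef]; dsimp only; split <;> [exact hM0; exact one_pos]
  have hwleM : ∀ x, w x ≤ M := by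
    intro x; rw [hwdef]; dsimp only; split <;> [exact le_refl M; exact hM1]
  have hw1 : ∀ x, 1 ≤ w x := by
    intro x; rw [hwdef]; dsimp only; split <;> [exact hM1; exact le_refl 1]
  have hwS : ∀ x ∈ S, w x = M := by intro x hx; rw [hwdef]; simp [hx]
  have hwnS : ∀ x, x ∉ S → w x = 1 := by intro x hx; rw [hwdef]; simp [hx]
  clear_value A₀ C₀ D δ N M w
  refine ⟨w, hwpos, ?_⟩
  intro C hC hopt x hx y hy hxy hsame
  obtain ⟨A, hAC, hxA, hyA⟩ := hsame
  -- upper bound on the cost of C₀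
  have hcostC₀ : kmeansCost C₀ w d ≤ N ^ 2 * D ^ 2 / 2 := by
    unfold kmeansCost
    rw [hC₀def, Finset.sum_insert hA₀notmem]
    have hsing : ∑ A ∈ (T.erase t₀).image (fun a => ({a} : Finset X)),
        ((1 / 2) * ∑ p ∈ A.offDiag, d p.1 p.2 ^ 2 * w p.1 * w p.2) / (∑ x ∈ A, w x)
        = 0 := by
      refine Finset.sum_eq_zero fun A hA => ?_
      obtain ⟨a, _, ha⟩ := Finset.mem_image.mp hA
      rw [← ha]
      simp [Finset.offDiag_singleton]
    rw [hsing, add_zero]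
    -- bound the big cluster term
    have hnum : ∑ p ∈ A₀.offDiag, d p.1 p.2 ^ 2 * w p.1 * w p.2
        ≤ (A₀.offDiag.card : ℝ) * (D ^ 2 * w t₀) := by
      have := Finset.sum_le_card_nsmul A₀.offDiag
        (fun p => d p.1 p.2 ^ 2 * w p.1 * w p.2) (D ^ 2 * w t₀) ?_
      · simpa [nsmul_eq_mul] using this
      · intro p hp
        obtain ⟨hp1, hp2, hp12⟩ := Finset.mem_offDiag.mp hp
        have hprod : w p.1 * w p.2 ≤ w t₀ := by
          by_cases h1 : p.1 = t₀
          · have : p.2 ∉ S := fun hc =>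
              hA₀mem p.2 hp2 (fun he => hp12 (h1.trans he.symm)) (hST hc)
            rw [h1, hwnS p.2 this, mul_one]
          · have hp1S : p.1 ∉ S := fun hc => hA₀mem p.1 hp1 h1 (hST hc)
            rw [hwnS p.1 hp1S, one_mul]
            by_cases h2 : p.2 = t₀
            · rw [h2]
            · rw [hwnS p.2 (fun hc => hA₀mem p.2 hp2 h2 (hST hc))]
              exact hw1 t₀
        calc d p.1 p.2 ^ 2 * w p.1 * w p.2 = d p.1 p.2 ^ 2 * (w p.1 * w p.2) := by
              ring
          _ ≤ D ^ 2 * (w p.1 * w p.2) := by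
              apply mul_le_mul_of_nonneg_right _ (le_of_lt
                (mul_pos (hwpos _) (hwpos _)))
              exact pow_le_pow_left₀ (hnn _ _) (hDle _ _) 2
          _ ≤ D ^ 2 * w t₀ := by
              apply mul_le_mul_of_nonneg_left hprod (by positivity)
    have hcard : (A₀.offDiag.card : ℝ) ≤ N ^ 2 := by
      rw [Finset.offDiag_card]
      have h1 : A₀.card ≤ Fintype.card X := Finset.card_le_univ A₀
      have : A₀.card * A₀.card - A₀.card ≤ Fintype.card X * Fintype.card X :=
        le_trans (Nat.sub_le _ _) (Nat.mul_le_mul h1 h1)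
      calc ((A₀.card * A₀.card - A₀.card : ℕ) : ℝ)
          ≤ ((Fintype.card X * Fintype.card X : ℕ) : ℝ) := by exact_mod_cast this
        _ = N ^ 2 := by rw [hNdef]; push_cast; ring
    have hden : w t₀ ≤ ∑ z ∈ A₀, w z :=
      Finset.single_le_sum (fun z _ => le_of_lt (hwpos z)) ht₀A₀
    have hwt₀ : 0 < w t₀ := hwpos t₀
    calc ((1 / 2) * ∑ p ∈ A₀.offDiag, d p.1 p.2 ^ 2 * w p.1 * w p.2) / (∑ z ∈ A₀, w z)
        ≤ ((1 / 2) * (N ^ 2 * (D ^ 2 * w t₀))) / w t₀ := by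
          apply div_le_div₀ (by positivity) _ hwt₀ hden
          have : (A₀.offDiag.card : ℝ) * (D ^ 2 * w t₀) ≤ N ^ 2 * (D ^ 2 * w t₀) :=
            mul_le_mul_of_nonneg_right hcard (by positivity)
          linarith [hnum]
      _ = N ^ 2 * D ^ 2 / 2 := by field_simp
  -- lower bound on the cost of C
  have hcostC : δ ^ 2 * M / N ≤ kmeansCost C w d := by
    obtain ⟨hCcard, hCne, hCdisj, hCcov⟩ := hC
    have hterm_nonneg : ∀ B ∈ C,
        0 ≤ ((1 / 2) * ∑ p ∈ B.offDiag, d p.1 p.2 ^ 2 * w p.1 * w p.2)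
          / (∑ z ∈ B, w z) := by
      intro B _
      apply div_nonneg _ (Finset.sum_nonneg fun z _ => le_of_lt (hwpos z))
      apply mul_nonneg (by norm_num)
      exact Finset.sum_nonneg fun p _ =>
        mul_nonneg (mul_nonneg (sq_nonneg _) (hwpos _).le) (hwpos _).le
    have hsingle : ((1 / 2) * ∑ p ∈ A.offDiag, d p.1 p.2 ^ 2 * w p.1 * w p.2)
        / (∑ z ∈ A, w z) ≤ kmeansCost C w d :=
      Finset.single_le_sum hterm_nonneg hAC
    refine le_trans ?_ hsingle
    have hpairne : ((x, y) : X × X) ≠ (y, x) := fun h => hxy (congrArg Prod.fst h)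
    have hpairsub : ({(x, y), (y, x)} : Finset (X × X)) ⊆ A.offDiag := by
      intro p hp
      rcases Finset.mem_insert.mp hp with h | h
      · exact h ▸ Finset.mem_offDiag.mpr ⟨hxA, hyA, hxy⟩
      · rw [Finset.mem_singleton] at h
        exact h ▸ Finset.mem_offDiag.mpr ⟨hyA, hxA, fun hc => hxy hc.symm⟩
    have hnum : 2 * (δ ^ 2 * M ^ 2) ≤
        ∑ p ∈ A.offDiag, d p.1 p.2 ^ 2 * w p.1 * w p.2 := by
      have hsub := Finset.sum_le_sum_of_subset_of_nonneg hpairsub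
        (fun p _ _ => mul_nonneg (mul_nonneg (sq_nonneg _) (hwpos _).le) (hwpos _).le :
          ∀ p ∈ A.offDiag, p ∉ ({(x, y), (y, x)} : Finset (X × X)) →
            (0:ℝ) ≤ d p.1 p.2 ^ 2 * w p.1 * w p.2)
      refine le_trans ?_ hsub
      rw [Finset.sum_pair hpairne]
      have hdxy : δ ≤ d x y := hδle x hx y hy hxy
      have hd2 : δ ^ 2 ≤ d x y ^ 2 := pow_le_pow_left₀ (le_of_lt hδpos) hdxy 2
      rw [hwS x hx, hwS y hy, hsym y x]
      nlinarith [hM0]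
    have hden : ∑ z ∈ A, w z ≤ N * M := by
      have := Finset.sum_le_card_nsmul A w M (fun z _ => hwleM z)
      have hcard : (A.card : ℝ) ≤ N := by
        rw [hNdef]; exact_mod_cast Finset.card_le_univ A
      calc ∑ z ∈ A, w z ≤ (A.card : ℝ) * M := by simpa [nsmul_eq_mul] using this
        _ ≤ N * M := mul_le_mul_of_nonneg_right hcard (le_of_lt hM0)
    have hdenpos : 0 < ∑ z ∈ A, w z :=
      Finset.sum_pos (fun z _ => hwpos z) ⟨x, hxA⟩
    calc δ ^ 2 * M / N = (δ ^ 2 * M ^ 2) / (N * M) := by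
          rw [pow_two M]; rw [eq_div_iff (by positivity)]; field_simp
      _ ≤ ((1 / 2) * ∑ p ∈ A.offDiag, d p.1 p.2 ^ 2 * w p.1 * w p.2)
          / (∑ z ∈ A, w z) := by
          apply div_le_div₀ _ _ hdenpos hden
          · apply mul_nonneg (by norm_num)
            exact Finset.sum_nonneg fun p _ =>
              mul_nonneg (mul_nonneg (sq_nonneg _) (hwpos _).le) (hwpos _).le
          · calc δ ^ 2 * M ^ 2 = (1 / 2) * (2 * (δ ^ 2 * M ^ 2)) := by ring
              _ ≤ (1 / 2) * ∑ p ∈ A.offDiag, d p.1 p.2 ^ 2 * w p.1 * w p.2 :=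
                mul_le_mul_of_nonneg_left hnum (by norm_num)
  -- contradiction
  have hkey : N ^ 2 * D ^ 2 / 2 < δ ^ 2 * M / N := by
    have hMeq : δ ^ 2 * M / N = δ ^ 2 / N + N ^ 2 * D ^ 2 := by
      rw [hMdef]; field_simp
    rw [hMeq]
    have h1 : 0 < δ ^ 2 / N := by positivity
    nlinarith [sq_nonneg N, sq_nonneg D, mul_nonneg (sq_nonneg N) (sq_nonneg D)]
  have := hopt C₀ hC₀
  linarith
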